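/- For two symmetric nonnegative k×k real matrices B₁, B₂, the squared graphon distance equals the doubly stochastic distance: δ₂(B₁, B₂)² = min over doubly stochastic k×k matrices S of (1/k²)·∑_{a,a',b,b' ∈ [k]} (B₁(a,b) − B₂(a',b'))²·S(a,a')·S(b,b'). -/

import Mathlib

open MeasureTheory Matrix
open scoped ENNReal

/-- A map `φ : ℝ → Fin k` is measure preserving on `[0,1]` if each fiber
has Lebesgue measure `1/k`. -/
def MeasurePres {k : ℕ} (φ : ℝ → Fin k) : Prop :=
  Measurable φ ∧ ∀ i : Fin k,
    volume (φ ⁻¹' {i} ∩ Set.Icc (0 : ℝ) 1) = ENNReal.ofReal (1 / k)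

lemma A0 {ι : Type*} [Fintype ι] [MeasurableSpace ι] [MeasurableSingletonClass ι]
    (ψ : ℝ → ι) (hψ : Measurable ψ) (G : ι → ℝ) :
    ∫ x in Set.Icc (0:ℝ) 1, G (ψ x) =
      ∑ p : ι, G p * (volume (ψ ⁻¹' {p} ∩ Set.Icc (0:ℝ) 1)).toReal := by
  classical
  have hdecomp : ∀ x, G (ψ x) = ∑ p : ι, Set.indicator (ψ ⁻¹' {p}) (fun _ => G p) x := by
    intro x
    rw [Finset.sum_eq_single (ψ x)]
    · simp [Set.indicator_apply]
    · intro b _ hb; simp [Set.indicator_apply, Ne.symm hb]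
    · simp
  simp_rw [hdecomp]
  rw [integral_finset_sum]
  · refine Finset.sum_congr rfl fun p _ => ?_
    rw [setIntegral_indicator (hψ (measurableSet_singleton p)), setIntegral_const,
      Set.inter_comm]
    rw [smul_eq_mul, mul_comm]
    rfl
  · intro p _
    exact (integrableOn_const (by simp)).indicator
      (hψ (measurableSet_singleton p))

lemma A1 {ι : Type*} [Fintype ι] [MeasurableSpace ι] [MeasurableSingletonClass ι]
    (ψ : ℝ → ι) (hψ : Measurable ψ) (F : ι → ι → ℝ) :
    ∫ x in Set.Icc (0:ℝ) 1, ∫ y in Set.Icc (0:ℝ) 1, F (ψ x) (ψ y) =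
      ∑ p : ι, ∑ q : ι, F p q * (volume (ψ ⁻¹' {p} ∩ Set.Icc (0:ℝ) 1)).toReal
        * (volume (ψ ⁻¹' {q} ∩ Set.Icc (0:ℝ) 1)).toReal := by
  have h1 : (∫ x in Set.Icc (0:ℝ) 1, ∫ y in Set.Icc (0:ℝ) 1, F (ψ x) (ψ y)) =
      ∫ x in Set.Icc (0:ℝ) 1,
        (fun p => ∑ q : ι, F p q * (volume (ψ ⁻¹' {q} ∩ Set.Icc (0:ℝ) 1)).toReal) (ψ x) := by
    refine integral_congr_ae (Filter.Eventually.of_forall fun x => ?_)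
    exact A0 ψ hψ (F (ψ x))
  rw [h1, A0 ψ hψ (fun p => ∑ q : ι, F p q * (volume (ψ ⁻¹' {q} ∩ Set.Icc (0:ℝ) 1)).toReal)]
  refine Finset.sum_congr rfl fun p _ => ?_
  rw [Finset.sum_mul]
  exact Finset.sum_congr rfl fun q _ => by ring

lemma dir1 {k : ℕ} (hk : 0 < k) (B₁ B₂ : Matrix (Fin k) (Fin k) ℝ)
    (φ₁ φ₂ : ℝ → Fin k) (h1 : MeasurePres φ₁) (h2 : MeasurePres φ₂) :
    ∃ S : Matrix (Fin k) (Fin k) ℝ,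
      (∀ a b, 0 ≤ S a b) ∧ (∀ a, ∑ b, S a b = 1) ∧ (∀ b, ∑ a, S a b = 1) ∧
      (∫ x in Set.Icc (0:ℝ) 1, ∫ y in Set.Icc (0:ℝ) 1,
          (B₁ (φ₁ x) (φ₁ y) - B₂ (φ₂ x) (φ₂ y)) ^ 2)
        = (1 / (k : ℝ) ^ 2) *
            ∑ a, ∑ a', ∑ b, ∑ b', (B₁ a b - B₂ a' b') ^ 2 * S a a' * S b b' := by
  classical
  set ψ : ℝ → Fin k × Fin k := fun x => (φ₁ x, φ₂ x) with hψdef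
  have hψ : Measurable ψ := h1.1.prodMk h2.1
  set m : Fin k × Fin k → ℝ≥0∞ := fun p => volume (ψ ⁻¹' {p} ∩ Set.Icc (0:ℝ) 1) with hmdef
  have hmfin : ∀ p, m p ≠ ⊤ := by
    intro p
    refine ne_top_of_le_ne_top ?_ (measure_mono Set.inter_subset_right)
    simp [Real.volume_Icc]
  have hmeas : ∀ p : Fin k × Fin k, MeasurableSet (ψ ⁻¹' {p} ∩ Set.Icc (0:ℝ) 1) :=
    fun p => (hψ (measurableSet_singleton p)).inter measurableSet_Icc
  have hkR : (k : ℝ) ≠ 0 := Nat.cast_ne_zero.mpr hk.ne'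
  -- row marginals
  have hrow : ∀ a : Fin k, ∑ a' : Fin k, m (a, a') = ENNReal.ofReal (1 / k) := by
    intro a
    rw [← h1.2 a]
    have hu : φ₁ ⁻¹' {a} ∩ Set.Icc (0:ℝ) 1
        = ⋃ a' ∈ (Finset.univ : Finset (Fin k)), (ψ ⁻¹' {(a, a')} ∩ Set.Icc (0:ℝ) 1) := by
      ext x
      simp only [Set.mem_inter_iff, Set.mem_preimage, Set.mem_singleton_iff, Set.mem_iUnion,
        Finset.mem_univ, exists_prop, true_and, hψdef, Prod.mk.injEq]
      constructor
      · rintro ⟨h, hx⟩; exact ⟨φ₂ x, ⟨⟨h, rfl⟩, hx⟩⟩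
      · rintro ⟨a', ⟨⟨h, _⟩, hx⟩⟩; exact ⟨h, hx⟩
    rw [hu, measure_biUnion_finset ?_ (fun p _ => hmeas _)]
    · intro a' _ a'' _ hne
      refine Set.disjoint_left.mpr ?_
      rintro x ⟨hx, _⟩ ⟨hy, _⟩
      simp only [Set.mem_preimage, Set.mem_singleton_iff, hψdef, Prod.mk.injEq] at hx hy
      exact hne (hx.2 ▸ hy.2)
  have hcol : ∀ a' : Fin k, ∑ a : Fin k, m (a, a') = ENNReal.ofReal (1 / k) := by
    intro a'
    rw [← h2.2 a']
    have hu : φ₂ ⁻¹' {a'} ∩ Set.Icc (0:ℝ) 1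
        = ⋃ a ∈ (Finset.univ : Finset (Fin k)), (ψ ⁻¹' {(a, a')} ∩ Set.Icc (0:ℝ) 1) := by
      ext x
      simp only [Set.mem_inter_iff, Set.mem_preimage, Set.mem_singleton_iff, Set.mem_iUnion,
        Finset.mem_univ, exists_prop, true_and, hψdef, Prod.mk.injEq]
      constructor
      · rintro ⟨h, hx⟩; exact ⟨φ₁ x, ⟨⟨rfl, h⟩, hx⟩⟩
      · rintro ⟨a, ⟨⟨_, h⟩, hx⟩⟩; exact ⟨h, hx⟩
    rw [hu, measure_biUnion_finset ?_ (fun p _ => hmeas _)]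
    · intro a₁ _ a₂ _ hne
      refine Set.disjoint_left.mpr ?_
      rintro x ⟨hx, _⟩ ⟨hy, _⟩
      simp only [Set.mem_preimage, Set.mem_singleton_iff, hψdef, Prod.mk.injEq] at hx hy
      exact hne (hx.1 ▸ hy.1)
  refine ⟨fun a a' => (k : ℝ) * (m (a, a')).toReal, ?_, ?_, ?_, ?_⟩
  · intro a b; positivity
  · intro a
    rw [← Finset.mul_sum, ← ENNReal.toReal_sum (fun p _ => hmfin _), hrow a,
      ENNReal.toReal_ofReal (by positivity)]
    field_simp
  · intro b
    rw [← Finset.mul_sum, ← ENNReal.toReal_sum (fun p _ => hmfin _), hcol b,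
      ENNReal.toReal_ofReal (by positivity)]
    field_simp
  · have heq : (∫ x in Set.Icc (0:ℝ) 1, ∫ y in Set.Icc (0:ℝ) 1,
          (B₁ (φ₁ x) (φ₁ y) - B₂ (φ₂ x) (φ₂ y)) ^ 2)
        = ∫ x in Set.Icc (0:ℝ) 1, ∫ y in Set.Icc (0:ℝ) 1,
            (fun p q : Fin k × Fin k => (B₁ p.1 q.1 - B₂ p.2 q.2) ^ 2) (ψ x) (ψ y) := rfl
    rw [heq, A1 ψ hψ (fun p q : Fin k × Fin k => (B₁ p.1 q.1 - B₂ p.2 q.2) ^ 2)]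
    rw [Fintype.sum_prod_type]
    simp_rw [Fintype.sum_prod_type, Finset.mul_sum]
    refine Finset.sum_congr rfl fun a _ => Finset.sum_congr rfl fun a' _ =>
      Finset.sum_congr rfl fun b _ => Finset.sum_congr rfl fun b' _ => ?_
    field_simp
    ring

lemma dir2 {k : ℕ} (hk : 0 < k) (B₁ B₂ : Matrix (Fin k) (Fin k) ℝ)
    (S : Matrix (Fin k) (Fin k) ℝ) (hS0 : ∀ a b, 0 ≤ S a b)
    (hSr : ∀ a, ∑ b, S a b = 1) (hSc : ∀ b, ∑ a, S a b = 1) :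
    ∃ φ₁ φ₂ : ℝ → Fin k, MeasurePres φ₁ ∧ MeasurePres φ₂ ∧
      (∫ x in Set.Icc (0:ℝ) 1, ∫ y in Set.Icc (0:ℝ) 1,
          (B₁ (φ₁ x) (φ₁ y) - B₂ (φ₂ x) (φ₂ y)) ^ 2)
        = (1 / (k : ℝ) ^ 2) *
            ∑ a, ∑ a', ∑ b, ∑ b', (B₁ a b - B₂ a' b') ^ 2 * S a a' * S b b' := by
  classical
  have hkR : (k:ℝ) ≠ 0 := Nat.cast_ne_zero.mpr hk.ne'
  have hN0 : 0 < k * k := Nat.mul_pos hk hk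
  set e := (finProdFinEquiv : Fin k × Fin k ≃ Fin (k * k)) with he
  set ℓ : Fin (k * k) → ℝ := fun j => S (e.symm j).1 (e.symm j).2 / k with hℓ
  have hℓ0 : ∀ j, 0 ≤ ℓ j := fun j => div_nonneg (hS0 _ _) (Nat.cast_nonneg k)
  have hℓsum : ∑ j, ℓ j = 1 := by
    rw [hℓ, Equiv.sum_comp e.symm (fun p : Fin k × Fin k => S p.1 p.2 / k),
      Fintype.sum_prod_type]
    simp_rw [← Finset.sum_div, hSr]
    rw [Finset.sum_const, Finset.card_univ, Fintype.card_fin]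
    field_simp
    simp
  set c : ℕ → ℝ := fun n => ∑ j ∈ Finset.univ.filter (fun j : Fin (k*k) => (j:ℕ) < n), ℓ j
    with hc
  have hcmono : ∀ {a b : ℕ}, a ≤ b → c a ≤ c b := by
    intro a b hab
    refine Finset.sum_le_sum_of_subset_of_nonneg ?_ (fun j _ _ => hℓ0 j)
    intro j hj
    simp only [Finset.mem_filter, Finset.mem_univ, true_and] at hj ⊢
    omega
  have hc0 : c 0 = 0 := by simp [hc]
  have hcN : c (k * k) = 1 := by
    rw [hc]
    simp only
    rw [Finset.filter_true_of_mem (fun j _ => j.isLt)]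
    exact hℓsum
  have hcstep : ∀ j : Fin (k*k), c (j.val + 1) = c j.val + ℓ j := by
    intro j
    have hins : Finset.univ.filter (fun i : Fin (k*k) => (i:ℕ) < j.val + 1)
        = insert j (Finset.univ.filter (fun i : Fin (k*k) => (i:ℕ) < j.val)) := by
      ext i
      simp only [Finset.mem_filter, Finset.mem_univ, true_and, Finset.mem_insert, Fin.ext_iff]
      omega
    rw [hc]
    simp only
    rw [hins, Finset.sum_insert (by simp)]
    ring
  -- intervals
  set I : Fin (k*k) → Set ℝ := fun j => Set.Ico (c j.val) (c (j.val + 1)) with hI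
  have hIuniq : ∀ (x : ℝ) (j j' : Fin (k*k)), x ∈ I j → x ∈ I j' → j = j' := by
    intro x j j' hj hj'
    rcases lt_trichotomy j.val j'.val with h | h | h
    · have : c (j.val + 1) ≤ c j'.val := hcmono h
      exact absurd (lt_of_lt_of_le hj.2 this) (not_lt.mpr hj'.1)
    · exact Fin.ext h
    · have : c (j'.val + 1) ≤ c j.val := hcmono h
      exact absurd (lt_of_lt_of_le hj'.2 this) (not_lt.mpr hj.1)
  set j₀ : Fin (k*k) := ⟨0, hN0⟩ with hj₀
  set ψ : ℝ → Fin (k*k) := fun x => if h : ∃ j : Fin (k*k), x ∈ I j then h.choose else j₀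
    with hψdef
  have hψI : ∀ (j : Fin (k*k)) (x : ℝ), x ∈ I j → ψ x = j := by
    intro j x hx
    have h : ∃ j : Fin (k*k), x ∈ I j := ⟨j, hx⟩
    rw [hψdef]
    simp only [dif_pos h]
    exact hIuniq x _ _ h.choose_spec hx
  have hfib : ∀ j : Fin (k*k),
      ψ ⁻¹' {j} = I j ∪ (if j = j₀ then (⋃ j', I j')ᶜ else ∅) := by
    intro j
    ext x
    simp only [Set.mem_preimage, Set.mem_singleton_iff, Set.mem_union]
    constructor
    · intro hx
      by_cases h : ∃ j' : Fin (k*k), x ∈ I j'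
      · left
        obtain ⟨j', hj'⟩ := h
        rw [← hx, hψI j' x hj']
        exact hj'
      · right
        have hx0 : ψ x = j₀ := by rw [hψdef]; simp only [dif_neg h]
        rw [if_pos (hx ▸ hx0 ▸ rfl)]
        simpa using h
    · rintro (hx | hx)
      · exact hψI j x hx
      · by_cases hj : j = j₀
        · rw [if_pos hj] at hx
          have h : ¬ ∃ j' : Fin (k*k), x ∈ I j' := by simpa using hx
          rw [hψdef]; simp only [dif_neg h]; exact hj.symm ▸ rfl
        · rw [if_neg hj] at hx; exact absurd hx (Set.notMem_empty x)
  have hψ : Measurable ψ := by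
    refine measurable_to_countable' fun j => ?_
    rw [hfib j]
    simp only [hI]
    refine measurableSet_Ico.union ?_
    split
    · exact (MeasurableSet.iUnion fun j' => measurableSet_Ico).compl
    · exact MeasurableSet.empty
  have hIsub : ∀ j : Fin (k*k), I j ⊆ Set.Icc (0:ℝ) 1 := by
    intro j x hx
    constructor
    · exact le_trans (by rw [← hc0]; exact hcmono (Nat.zero_le _)) hx.1
    · exact le_of_lt (lt_of_lt_of_le hx.2 (by rw [← hcN]; exact hcmono (by omega)))
  have hvol_lower : ∀ j, ENNReal.ofReal (ℓ j) ≤ volume (ψ ⁻¹' {j} ∩ Set.Icc (0:ℝ) 1) := by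
    intro j
    have h1 : I j ⊆ ψ ⁻¹' {j} ∩ Set.Icc (0:ℝ) 1 :=
      fun x hx => ⟨hψI j x hx, hIsub j hx⟩
    have h2 : volume (I j) = ENNReal.ofReal (ℓ j) := by
      simp only [hI, Real.volume_Ico, hcstep j]
      congr 1; ring
    rw [← h2]
    exact measure_mono h1
  have hfibdisj : ∀ j j' : Fin (k*k), j ≠ j' →
      Disjoint (ψ ⁻¹' {j} ∩ Set.Icc (0:ℝ) 1) (ψ ⁻¹' {j'} ∩ Set.Icc (0:ℝ) 1) := by
    intro j j' hne
    refine Set.disjoint_left.mpr ?_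
    rintro x ⟨hx, _⟩ ⟨hy, _⟩
    simp only [Set.mem_preimage, Set.mem_singleton_iff] at hx hy
    exact hne (hx ▸ hy ▸ rfl)
  have hfibmeas : ∀ j, MeasurableSet (ψ ⁻¹' {j} ∩ Set.Icc (0:ℝ) 1) :=
    fun j => (hψ (measurableSet_singleton j)).inter measurableSet_Icc
  have htotal : ∑ j : Fin (k*k), volume (ψ ⁻¹' {j} ∩ Set.Icc (0:ℝ) 1) = 1 := by
    rw [← measure_biUnion_finset (fun j _ j' _ hne => hfibdisj j j' hne)
      (fun j _ => hfibmeas j)]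
    have hU : ⋃ j ∈ (Finset.univ : Finset (Fin (k*k))), (ψ ⁻¹' {j} ∩ Set.Icc (0:ℝ) 1)
        = Set.Icc (0:ℝ) 1 := by
      ext x
      simp only [Set.mem_iUnion, Finset.mem_univ, true_and, exists_prop, Set.mem_inter_iff,
        Set.mem_preimage, Set.mem_singleton_iff]
      constructor
      · rintro ⟨j, _, hx⟩; exact hx
      · intro hx; exact ⟨ψ x, rfl, hx⟩
    rw [hU]
    simp [Real.volume_Icc]
  have hvfin : ∀ j, volume (ψ ⁻¹' {j} ∩ Set.Icc (0:ℝ) 1) ≠ ⊤ := by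
    intro j
    refine ne_top_of_le_ne_top ?_ (measure_mono Set.inter_subset_right)
    simp [Real.volume_Icc]
  have hle : ∀ j, ℓ j ≤ (volume (ψ ⁻¹' {j} ∩ Set.Icc (0:ℝ) 1)).toReal := by
    intro j
    rw [← ENNReal.toReal_ofReal (hℓ0 j)]
    exact ENNReal.toReal_mono (hvfin j) (hvol_lower j)
  have hsum_toReal : ∑ j, ℓ j = ∑ j, (volume (ψ ⁻¹' {j} ∩ Set.Icc (0:ℝ) 1)).toReal := by
    rw [← ENNReal.toReal_sum (fun j _ => hvfin j), htotal, hℓsum]; simp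
  have hveq : ∀ j, (volume (ψ ⁻¹' {j} ∩ Set.Icc (0:ℝ) 1)).toReal = ℓ j := by
    intro j
    exact ((Finset.sum_eq_sum_iff_of_le (fun j _ => hle j)).mp hsum_toReal j
      (Finset.mem_univ j)).symm
  have hvENN : ∀ j, volume (ψ ⁻¹' {j} ∩ Set.Icc (0:ℝ) 1) = ENNReal.ofReal (ℓ j) := by
    intro j
    rw [← hveq j, ENNReal.ofReal_toReal (hvfin j)]
  have hmarg : ∀ g : Fin (k*k) → Fin k, ∀ a : Fin k,
      volume ((fun x => g (ψ x)) ⁻¹' {a} ∩ Set.Icc (0:ℝ) 1)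
        = ENNReal.ofReal (∑ j ∈ Finset.univ.filter (fun j => g j = a), ℓ j) := by
    intro g a
    have hu : (fun x => g (ψ x)) ⁻¹' {a} ∩ Set.Icc (0:ℝ) 1
        = ⋃ j ∈ Finset.univ.filter (fun j => g j = a), (ψ ⁻¹' {j} ∩ Set.Icc (0:ℝ) 1) := by
      ext x
      simp only [Set.mem_inter_iff, Set.mem_preimage, Set.mem_singleton_iff, Set.mem_iUnion,
        Finset.mem_filter, Finset.mem_univ, true_and, exists_prop]
      constructor
      · rintro ⟨h, hx⟩; exact ⟨ψ x, h, rfl, hx⟩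
      · rintro ⟨j, hg, hj, hx⟩; exact ⟨by rw [hj, hg], hx⟩
    rw [hu, measure_biUnion_finset (fun j _ j' _ hne => hfibdisj j j' hne)
      (fun j _ => hfibmeas j),
      ENNReal.ofReal_sum_of_nonneg (fun j _ => hℓ0 j)]
    exact Finset.sum_congr rfl fun j _ => hvENN j
  have hsum1 : ∀ a : Fin k,
      ∑ j ∈ Finset.univ.filter (fun j => (e.symm j).1 = a), ℓ j = 1 / k := by
    intro a
    rw [Finset.sum_filter]
    simp only [hℓ]
    rw [Equiv.sum_comp e.symm
      (fun p : Fin k × Fin k => if p.1 = a then S p.1 p.2 / k else 0),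
      Fintype.sum_prod_type]
    have hrow : ∀ a₀ : Fin k, (∑ a' : Fin k, if a₀ = a then S a₀ a' / (k:ℝ) else 0)
        = if a₀ = a then 1 / (k:ℝ) else 0 := by
      intro a₀
      split
      · next h => subst h; rw [← Finset.sum_div, hSr]
      · simp
    simp_rw [hrow]
    rw [Finset.sum_ite_eq' Finset.univ a (fun _ => 1 / (k:ℝ))]
    simp
  have hsum2 : ∀ b : Fin k,
      ∑ j ∈ Finset.univ.filter (fun j => (e.symm j).2 = b), ℓ j = 1 / k := by
    intro b
    rw [Finset.sum_filter]
    simp only [hℓ]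
    rw [Equiv.sum_comp e.symm
      (fun p : Fin k × Fin k => if p.2 = b then S p.1 p.2 / k else 0),
      Fintype.sum_prod_type]
    have hcol : ∀ a₀ : Fin k, (∑ a' : Fin k, if a' = b then S a₀ a' / (k:ℝ) else 0)
        = S a₀ b / k := by
      intro a₀
      rw [Finset.sum_ite_eq' Finset.univ b (fun a' => S a₀ a' / (k:ℝ))]
      simp
    simp_rw [hcol, ← Finset.sum_div, hSc]
  refine ⟨fun x => (e.symm (ψ x)).1, fun x => (e.symm (ψ x)).2, ⟨?_, ?_⟩, ⟨?_, ?_⟩, ?_⟩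
  · exact (measurable_of_countable (fun j : Fin (k*k) => (e.symm j).1)).comp hψ
  · intro a
    rw [hmarg (fun j => (e.symm j).1) a, hsum1 a]
  · exact (measurable_of_countable (fun j : Fin (k*k) => (e.symm j).2)).comp hψ
  · intro b
    rw [hmarg (fun j => (e.symm j).2) b, hsum2 b]
  · have heq : (∫ x in Set.Icc (0:ℝ) 1, ∫ y in Set.Icc (0:ℝ) 1,
        (B₁ ((e.symm (ψ x)).1) ((e.symm (ψ y)).1)
          - B₂ ((e.symm (ψ x)).2) ((e.symm (ψ y)).2)) ^ 2)
        = ∫ x in Set.Icc (0:ℝ) 1, ∫ y in Set.Icc (0:ℝ) 1,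
            (fun j j' : Fin (k*k) =>
              (B₁ (e.symm j).1 (e.symm j').1 - B₂ (e.symm j).2 (e.symm j').2) ^ 2)
              (ψ x) (ψ y) := rfl
    rw [heq, A1 ψ hψ (fun j j' : Fin (k*k) =>
      (B₁ (e.symm j).1 (e.symm j').1 - B₂ (e.symm j).2 (e.symm j').2) ^ 2)]
    simp_rw [hveq]
    simp only [hℓ]
    have step : (∑ j : Fin (k*k), ∑ j' : Fin (k*k),
          (B₁ (e.symm j).1 (e.symm j').1 - B₂ (e.symm j).2 (e.symm j').2) ^ 2
            * (S (e.symm j).1 (e.symm j).2 / (k:ℝ)) * (S (e.symm j').1 (e.symm j').2 / (k:ℝ)))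
        = ∑ p : Fin k × Fin k, ∑ q : Fin k × Fin k,
            (B₁ p.1 q.1 - B₂ p.2 q.2) ^ 2 * (S p.1 p.2 / (k:ℝ)) * (S q.1 q.2 / (k:ℝ)) := by
      have hin : ∀ j : Fin (k*k),
          (∑ j' : Fin (k*k), (B₁ (e.symm j).1 (e.symm j').1
              - B₂ (e.symm j).2 (e.symm j').2) ^ 2
            * (S (e.symm j).1 (e.symm j).2 / (k:ℝ)) * (S (e.symm j').1 (e.symm j').2 / (k:ℝ)))
          = ∑ q : Fin k × Fin k, (B₁ (e.symm j).1 q.1 - B₂ (e.symm j).2 q.2) ^ 2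
              * (S (e.symm j).1 (e.symm j).2 / (k:ℝ)) * (S q.1 q.2 / (k:ℝ)) :=
        fun j => Equiv.sum_comp e.symm (fun q : Fin k × Fin k =>
          (B₁ (e.symm j).1 q.1 - B₂ (e.symm j).2 q.2) ^ 2
            * (S (e.symm j).1 (e.symm j).2 / (k:ℝ)) * (S q.1 q.2 / (k:ℝ)))
      rw [Finset.sum_congr rfl fun j _ => hin j]
      exact Equiv.sum_comp e.symm (fun p : Fin k × Fin k => ∑ q : Fin k × Fin k,
        (B₁ p.1 q.1 - B₂ p.2 q.2) ^ 2 * (S p.1 p.2 / (k:ℝ)) * (S q.1 q.2 / (k:ℝ)))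
    rw [step]
    rw [Fintype.sum_prod_type]
    simp_rw [Fintype.sum_prod_type, Finset.mul_sum]
    refine Finset.sum_congr rfl fun a _ => Finset.sum_congr rfl fun a' _ =>
      Finset.sum_congr rfl fun b _ => Finset.sum_congr rfl fun b' _ => ?_
    ring


theorem graphon_dist_eq_ds_dist (k : ℕ) (hk : 0 < k)
    (B₁ B₂ : Matrix (Fin k) (Fin k) ℝ)
    (h₁s : B₁ᵀ = B₁) (h₂s : B₂ᵀ = B₂)
    (h₁0 : ∀ a b, 0 ≤ B₁ a b) (h₂0 : ∀ a b, 0 ≤ B₂ a b) :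
    sInf {r : ℝ | ∃ φ₁ φ₂ : ℝ → Fin k, MeasurePres φ₁ ∧ MeasurePres φ₂ ∧
        r = ∫ x in Set.Icc (0 : ℝ) 1, ∫ y in Set.Icc (0 : ℝ) 1,
              (B₁ (φ₁ x) (φ₁ y) - B₂ (φ₂ x) (φ₂ y)) ^ 2}
    = sInf {r : ℝ | ∃ S : Matrix (Fin k) (Fin k) ℝ,
        (∀ a b, 0 ≤ S a b) ∧ (∀ a, ∑ b, S a b = 1) ∧ (∀ b, ∑ a, S a b = 1) ∧
        r = (1 / (k : ℝ) ^ 2) *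
              ∑ a, ∑ a', ∑ b, ∑ b', (B₁ a b - B₂ a' b') ^ 2 * S a a' * S b b'} := by
  congr 1
  ext r
  simp only [Set.mem_setOf_eq]
  constructor
  · rintro ⟨φ₁, φ₂, h1, h2, rfl⟩
    obtain ⟨S, hS0, hSr, hSc, hval⟩ := dir1 hk B₁ B₂ φ₁ φ₂ h1 h2
    exact ⟨S, hS0, hSr, hSc, hval⟩
  · rintro ⟨S, hS0, hSr, hSc, rfl⟩
    obtain ⟨φ₁, φ₂, h1, h2, hval⟩ := dir2 hk B₁ B₂ S hS0 hSr hSc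
    exact ⟨φ₁, φ₂, h1, h2, hval.symm⟩
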